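/- There exists a constant c > 0 such that for every f ≥ 1, the number of maximal embedding dimension numerical semigroups with Frobenius number f is at least c · 2^(f/3). In particular, MED(f) ≥ 2^(-8/3) · 2^(f/3). -/

import Mathlib

/-- A numerical semigroup: a subset of ℕ containing 0, closed under addition,
with finite complement. -/
def IsNumericalSemigroup (S : Set ℕ) : Prop :=
  0 ∈ S ∧ (∀ a ∈ S, ∀ b ∈ S, a + b ∈ S) ∧ Sᶜ.Finite

/-- The Frobenius number: the largest gap. -/
noncomputable def frob (S : Set ℕ) : ℕ := sSup Sᶜ

/-- The multiplicity: the smallest nonzero element. -/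
noncomputable def mult (S : Set ℕ) : ℕ := sInf (S \ {0})

/-- The genus: the number of gaps. -/
noncomputable def genus (S : Set ℕ) : ℕ := Sᶜ.ncard

/-- The depth `⌈(f+1)/m⌉`, written as `(f + m) / m` using ℕ-division. -/
noncomputable def depth (S : Set ℕ) : ℕ := (frob S + mult S) / mult S

/-- The embedding dimension: the number of minimal generators, i.e. nonzero elements
that are not the sum of two nonzero elements of `S`. -/
noncomputable def embDim (S : Set ℕ) : ℕ :=
  ((S \ {0}) \ {a | ∃ x ∈ S \ ({0} : Set ℕ), ∃ y ∈ S \ ({0} : Set ℕ), a = x + y}).ncard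

/-- `MED f`: the number of maximal-embedding-dimension numerical semigroups
with Frobenius number `f`. -/
noncomputable def MED (f : ℕ) : ℕ :=
  Set.ncard {S : Set ℕ | IsNumericalSemigroup S ∧ frob S = f ∧ embDim S = mult S}


namespace MEDaux

/-- The MED set is finite. -/
lemma med_finite (f : ℕ) :
    {S : Set ℕ | IsNumericalSemigroup S ∧ frob S = f ∧ embDim S = mult S}.Finite := by
  have key : ∀ S ∈ {S : Set ℕ | IsNumericalSemigroup S ∧ frob S = f ∧ embDim S = mult S},
      ∀ n, f < n → n ∈ S := by
    intro S hS n hn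
    obtain ⟨⟨-, -, hfin⟩, hf, -⟩ := hS
    by_contra hns
    have h1 : n ≤ sSup Sᶜ := le_csSup hfin.bddAbove hns
    have h2 : sSup Sᶜ = f := hf
    omega
  apply Set.Finite.of_finite_image (f := fun S => S ∩ Set.Iic f)
  · exact Set.Finite.subset ((Set.finite_Iic f).finite_subsets)
      (by rintro _ ⟨S, -, rfl⟩; exact Set.inter_subset_right)
  · intro S1 h1 S2 h2 heq
    have heq' : S1 ∩ Set.Iic f = S2 ∩ Set.Iic f := heq
    ext n
    rcases le_or_gt n f with h | h
    · constructor
      · intro hn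
        have : n ∈ S2 ∩ Set.Iic f := heq' ▸ ⟨hn, h⟩
        exact this.1
      · intro hn
        have : n ∈ S1 ∩ Set.Iic f := heq' ▸ ⟨hn, h⟩
        exact this.1
    · exact ⟨fun _ => key S2 h2 n h, fun _ => key S1 h1 n h⟩

/-- The half-line semigroup shows `MED f ≥ 1`. -/
lemma one_le_MED (f : ℕ) (hf : 1 ≤ f) : 1 ≤ MED f := by
  set S : Set ℕ := insert 0 (Set.Ici (f + 1)) with hSdef
  have hmemS : ∀ n, n ∈ S ↔ n = 0 ∨ f + 1 ≤ n := by
    intro n; simp [hSdef, Set.mem_insert_iff, Set.mem_Ici]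
  have hcompl : Sᶜ = Set.Icc 1 f := by
    ext n; simp only [Set.mem_compl_iff, hmemS, Set.mem_Icc]; omega
  have hns : IsNumericalSemigroup S := by
    refine ⟨(hmemS 0).2 (Or.inl rfl), ?_, ?_⟩
    · intro a ha b hb
      rw [hmemS] at ha hb ⊢; omega
    · rw [hcompl]; exact Set.finite_Icc 1 f
  have hfrob : frob S = f := by
    rw [frob, hcompl]
    apply le_antisymm
    · exact csSup_le ⟨f, by simp [Set.mem_Icc]; omega⟩ (fun n hn => hn.2)
    · exact le_csSup (Set.finite_Icc 1 f).bddAbove (by simp [Set.mem_Icc]; omega)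
  have hSdiff : S \ {0} = Set.Ici (f + 1) := by
    ext n; simp only [Set.mem_diff, hmemS, Set.mem_singleton_iff, Set.mem_Ici]; omega
  have hmult : mult S = f + 1 := by
    rw [mult, hSdiff]
    apply le_antisymm (Nat.sInf_le (by simp))
    exact le_csInf ⟨f + 1, by simp⟩ (fun n hn => hn)
  have hemb : embDim S = f + 1 := by
    have hgens : (S \ {0}) \ {a | ∃ x ∈ S \ ({0} : Set ℕ), ∃ y ∈ S \ ({0} : Set ℕ), a = x + y}
        = Set.Icc (f + 1) (2 * f + 1) := by
      rw [hSdiff]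
      ext n
      simp only [Set.mem_diff, Set.mem_Ici, Set.mem_setOf_eq, Set.mem_Icc]
      constructor
      · rintro ⟨h1, h2⟩
        refine ⟨h1, ?_⟩
        by_contra hc
        exact h2 ⟨f + 1, by omega, n - (f + 1), by omega, by omega⟩
      · rintro ⟨h1, h2⟩
        exact ⟨h1, by rintro ⟨x, hx, y, hy, rfl⟩; omega⟩
    rw [embDim, hgens, ← Finset.coe_Icc, Set.ncard_coe_finset, Nat.card_Icc]
    omega
  have hmem : S ∈ {S : Set ℕ | IsNumericalSemigroup S ∧ frob S = f ∧ embDim S = mult S} :=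
    ⟨hns, hfrob, by rw [hemb, hmult]⟩
  have := (Set.ncard_pos (med_finite f)).2 ⟨S, hmem⟩
  rw [MED]; omega

section Construction

variable (m g : ℕ) (B : Set ℕ)

def Tset : Set ℕ := {0, m} ∪ B ∪ Set.Ioi g

def Sset : Set ℕ := insert 0 ((fun t => m + t) '' Tset m g B)

/-- The Apéry-type set. -/
def ApSet : Set ℕ :=
  {0} ∪ B ∪ (Set.Ioc g (g + m) \ ({2 * m} ∪ (fun a => m + a) '' B))

variable {m g B}
variable (h1 : 0 < g) (h2 : g < 2 * m) (h3 : m < g)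
  (hB : ∀ a ∈ B, g < 2 * a ∧ a < g ∧ a ≠ m) (hBfin : B.Finite)

include h1 h2 h3 hB

lemma mem_T (t : ℕ) : t ∈ Tset m g B ↔ t = 0 ∨ t = m ∨ t ∈ B ∨ g < t := by
  simp [Tset, Set.mem_union, Set.mem_insert_iff, Set.mem_Ioi, or_assoc]

lemma T_pos {t : ℕ} (ht : t ∈ Tset m g B) (ht0 : t ≠ 0) : g < 2 * t := by
  rw [mem_T h1 h2 h3 hB] at ht
  rcases ht with rfl | rfl | h | h
  · omega
  · omega
  · exact (hB _ h).1
  · omega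

lemma T_add {t1 t2 : ℕ} (ht1 : t1 ∈ Tset m g B) (ht2 : t2 ∈ Tset m g B) :
    t1 + t2 ∈ Tset m g B := by
  rcases eq_or_ne t1 0 with rfl | h01
  · simpa using ht2
  rcases eq_or_ne t2 0 with rfl | h02
  · simpa using ht1
  have := T_pos h1 h2 h3 hB ht1 h01
  have := T_pos h1 h2 h3 hB ht2 h02
  rw [mem_T h1 h2 h3 hB]; omega

lemma mem_S (n : ℕ) : n ∈ Sset m g B ↔ n = 0 ∨ ∃ t ∈ Tset m g B, n = m + t := by
  simp only [Sset, Set.mem_insert_iff, Set.mem_image]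
  constructor
  · rintro (rfl | ⟨t, ht, rfl⟩)
    · exact Or.inl rfl
    · exact Or.inr ⟨t, ht, rfl⟩
  · rintro (rfl | ⟨t, ht, rfl⟩)
    · exact Or.inl rfl
    · exact Or.inr ⟨t, ht, rfl⟩

lemma S_isNS : IsNumericalSemigroup (Sset m g B) := by
  refine ⟨Or.inl rfl, ?_, ?_⟩
  · intro a ha b hb
    rw [mem_S h1 h2 h3 hB] at ha hb ⊢
    rcases ha with rfl | ⟨t1, ht1, rfl⟩
    · simpa using hb
    rcases hb with rfl | ⟨t2, ht2, rfl⟩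
    · exact Or.inr ⟨t1, ht1, by omega⟩
    · refine Or.inr ⟨m + t1 + t2, ?_, by omega⟩
      have hmT : m ∈ Tset m g B := by rw [mem_T h1 h2 h3 hB]; omega
      have := T_add h1 h2 h3 hB (T_add h1 h2 h3 hB hmT ht1) ht2
      convert this using 1
  · apply Set.Finite.subset (Set.finite_Iic (m + g))
    intro n hn
    simp only [Set.mem_compl_iff, mem_S h1 h2 h3 hB] at hn
    push_neg at hn
    obtain ⟨hn0, hn2⟩ := hn
    by_contra hc
    simp only [Set.mem_Iic, not_le] at hc
    exact hn2 (n - m) (by rw [mem_T h1 h2 h3 hB]; omega) (by omega)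

lemma f_not_mem_S : m + g ∉ Sset m g B := by
  rw [mem_S h1 h2 h3 hB]
  push_neg
  refine ⟨by omega, ?_⟩
  rintro t ht heq
  rw [mem_T h1 h2 h3 hB] at ht
  rcases ht with rfl | rfl | h | h
  · omega
  · omega
  · have := hB _ h; omega
  · omega

lemma S_frob : frob (Sset m g B) = m + g := by
  have hub : ∀ n ∈ (Sset m g B)ᶜ, n ≤ m + g := by
    intro n hn
    simp only [Set.mem_compl_iff, mem_S h1 h2 h3 hB] at hn
    push_neg at hn
    by_contra hc
    exact hn.2 (n - m) (by rw [mem_T h1 h2 h3 hB]; omega) (by omega)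
  have hmem : m + g ∈ (Sset m g B)ᶜ := f_not_mem_S h1 h2 h3 hB
  apply le_antisymm
  · exact csSup_le ⟨_, hmem⟩ hub
  · exact le_csSup ⟨m + g, fun n hn => hub n hn⟩ hmem

lemma S_diff_zero : Sset m g B \ {0} = (fun t => m + t) '' Tset m g B := by
  ext n
  simp only [Set.mem_diff, mem_S h1 h2 h3 hB, Set.mem_singleton_iff, Set.mem_image]
  constructor
  · rintro ⟨rfl | ⟨t, ht, rfl⟩, hn0⟩
    · omega
    · exact ⟨t, ht, rfl⟩
  · rintro ⟨t, ht, rfl⟩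
    exact ⟨Or.inr ⟨t, ht, rfl⟩, by omega⟩

lemma S_mult : mult (Sset m g B) = m := by
  rw [mult, S_diff_zero h1 h2 h3 hB]
  apply le_antisymm
  · have h0T : (0 : ℕ) ∈ Tset m g B := by rw [mem_T h1 h2 h3 hB]; omega
    have hm : m + 0 ∈ (fun t => m + t) '' Tset m g B := ⟨0, h0T, rfl⟩
    simpa using Nat.sInf_le hm
  · refine le_csInf ⟨m + 0, ⟨0, by rw [mem_T h1 h2 h3 hB]; omega, rfl⟩⟩ ?_
    rintro n ⟨t, ht, rfl⟩
    exact Nat.le_add_right m t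

lemma gens_eq :
    (Sset m g B \ {0}) \
      {a | ∃ x ∈ Sset m g B \ ({0} : Set ℕ), ∃ y ∈ Sset m g B \ ({0} : Set ℕ), a = x + y}
    = (fun t => m + t) '' ApSet m g B := by
  have hsum : {a | ∃ x ∈ Sset m g B \ ({0} : Set ℕ), ∃ y ∈ Sset m g B \ ({0} : Set ℕ), a = x + y}
      = (fun t => 2 * m + t) '' Tset m g B := by
    ext a
    simp only [Set.mem_setOf_eq, S_diff_zero h1 h2 h3 hB, Set.mem_image]
    constructor
    · rintro ⟨x, ⟨t1, ht1, rfl⟩, y, ⟨t2, ht2, rfl⟩, rfl⟩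
      exact ⟨t1 + t2, T_add h1 h2 h3 hB ht1 ht2, by omega⟩
    · rintro ⟨t, ht, rfl⟩
      have hmT : (0 : ℕ) ∈ Tset m g B := by rw [mem_T h1 h2 h3 hB]; omega
      exact ⟨m + t, ⟨t, ht, rfl⟩, m + 0, ⟨0, hmT, rfl⟩, by omega⟩
  rw [hsum, S_diff_zero h1 h2 h3 hB]
  ext n
  simp only [Set.mem_diff, Set.mem_image, ApSet, Set.mem_union, Set.mem_singleton_iff,
    Set.mem_Ioc, Set.mem_insert_iff]
  constructor
  · rintro ⟨⟨t, ht, rfl⟩, hns⟩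
    refine ⟨t, ?_, rfl⟩
    have hdec : ∀ t' ∈ Tset m g B, t ≠ m + t' := by
      intro t' ht' hc
      exact hns ⟨t', ht', by omega⟩
    rw [mem_T h1 h2 h3 hB] at ht
    rcases ht with rfl | rfl | h | h
    · left; left; rfl
    · exact absurd rfl (hdec 0 (by rw [mem_T h1 h2 h3 hB]; omega))
    · left; right; exact h
    · right
      have h2m : t ≠ 2 * m := fun hc =>
        hdec m (by rw [mem_T h1 h2 h3 hB]; omega) (by omega)
      have hub : t ≤ g + m := by
        by_contra hc
        exact hdec (t - m) (by rw [mem_T h1 h2 h3 hB]; omega) (by omega)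
      refine ⟨⟨h, hub⟩, ?_⟩
      rintro (hc | ⟨b, hb, hc⟩)
      · exact h2m hc
      · exact hdec b (by rw [mem_T h1 h2 h3 hB]; tauto) (by omega)
  · rintro ⟨t, ht, rfl⟩
    have htT : t ∈ Tset m g B := by
      rw [mem_T h1 h2 h3 hB]
      rcases ht with (rfl | h) | ⟨⟨h, _⟩, _⟩
      · omega
      · tauto
      · omega
    refine ⟨⟨t, htT, rfl⟩, ?_⟩
    rintro ⟨t', ht', heq⟩
    have ht'eq : t = m + t' := by omega
    rw [mem_T h1 h2 h3 hB] at ht'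
    rcases ht with (rfl | hbt) | ⟨⟨hlb, hub⟩, hnot⟩
    · omega
    · have := hB _ hbt
      rcases ht' with rfl | rfl | h | h
      · omega
      · omega
      · have := hB _ h; omega
      · omega
    · rcases ht' with rfl | rfl | h | h
      · omega
      · exact hnot (Or.inl (by omega))
      · exact hnot (Or.inr ⟨t', h, by omega⟩)
      · omega

include hBfin

lemma ap_card : (ApSet m g B).ncard = m := by
  have himB : ((fun a => m + a) '' B).Finite := hBfin.image _
  have hinj : Function.Injective (fun a : ℕ => m + a) := fun a b h => by
    simpa using h
  have hEsub : ({2 * m} ∪ (fun a => m + a) '' B : Set ℕ) ⊆ Set.Ioc g (g + m) := by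
    rintro x (rfl | ⟨b, hb, rfl⟩)
    · simp only [Set.mem_Ioc]; omega
    · have := hB _ hb; simp only [Set.mem_Ioc]; omega
  have hEfin : ({2 * m} ∪ (fun a => m + a) '' B : Set ℕ).Finite :=
    (Set.finite_singleton _).union himB
  have hIoc_card : (Set.Ioc g (g + m)).ncard = m := by
    rw [← Finset.coe_Ioc, Set.ncard_coe_finset, Nat.card_Ioc]; omega
  have h2mnot : (2 * m) ∉ (fun a => m + a) '' B := by
    rintro ⟨b, hb, hc⟩
    have hc' : m + b = 2 * m := hc
    have := hB _ hb; omega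
  have hEcard : ({2 * m} ∪ (fun a => m + a) '' B : Set ℕ).ncard = 1 + B.ncard := by
    rw [Set.singleton_union, Set.ncard_insert_of_notMem h2mnot himB,
      Set.ncard_image_of_injective _ hinj]
    omega
  have hIocFin : (Set.Ioc g (g + m)).Finite := Set.finite_Ioc _ _
  have hDcard : (Set.Ioc g (g + m) \ ({2 * m} ∪ (fun a => m + a) '' B)).ncard
      = m - (1 + B.ncard) := by
    rw [Set.ncard_diff hEsub hEfin, hIoc_card, hEcard]
  have hle : 1 + B.ncard ≤ m := by
    have := Set.ncard_le_ncard hEsub hIocFin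
    rw [hEcard, hIoc_card] at this
    exact this
  have h0B : (0 : ℕ) ∉ B := fun h => by have := hB _ h; omega
  have hzB : ({0} ∪ B : Set ℕ).ncard = 1 + B.ncard := by
    rw [Set.singleton_union, Set.ncard_insert_of_notMem h0B hBfin]
    omega
  have hdisj : Disjoint ({0} ∪ B : Set ℕ)
      (Set.Ioc g (g + m) \ ({2 * m} ∪ (fun a => m + a) '' B)) := by
    rw [Set.disjoint_left]
    rintro a (rfl | haB) ⟨⟨hlb, -⟩, -⟩
    · omega
    · have := hB _ haB; omega
  rw [ApSet, Set.ncard_union_eq hdisj ((Set.finite_singleton 0).union hBfin)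
    hIocFin.diff, hzB, hDcard]
  omega

lemma S_embDim : embDim (Sset m g B) = m := by
  rw [embDim, gens_eq h1 h2 h3 hB,
    Set.ncard_image_of_injective _ (fun a b h => by simpa using h : Function.Injective (fun t : ℕ => m + t)),
    ap_card h1 h2 h3 hB hBfin]

omit hBfin

lemma S_recover (a : ℕ) (ha1 : g < 2 * a) (ha2 : a < g) (ha3 : a ≠ m) :
    m + a ∈ Sset m g B ↔ a ∈ B := by
  rw [mem_S h1 h2 h3 hB]
  constructor
  · rintro (h | ⟨t, ht, heq⟩)
    · omega
    · have : t = a := by omega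
      subst this
      rw [mem_T h1 h2 h3 hB] at ht
      rcases ht with rfl | rfl | h | h
      · omega
      · omega
      · exact h
      · omega
  · intro h
    exact Or.inr ⟨a, by rw [mem_T h1 h2 h3 hB]; tauto, rfl⟩

end Construction

lemma med_lower (f : ℕ) (hf : 9 ≤ f) : ∃ k : ℕ, f ≤ 3 * k + 8 ∧ 2 ^ k ≤ MED f := by
  set m : ℕ := f / 3 + 1 with hm
  set g : ℕ := f - m with hg
  have h1 : 0 < g := by omega
  have h2 : g < 2 * m := by omega
  have h3 : m < g := by omega
  set Jf : Finset ℕ := (Finset.Ioo (g / 2) g).erase m with hJf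
  have hJmem : ∀ a ∈ Jf, g < 2 * a ∧ a < g ∧ a ≠ m := by
    intro a ha
    rw [hJf, Finset.mem_erase, Finset.mem_Ioo] at ha
    omega
  have hJcard : Jf.card = g - g / 2 - 2 := by
    rw [hJf, Finset.card_erase_of_mem (by rw [Finset.mem_Ioo]; omega), Nat.card_Ioo]
    omega
  refine ⟨Jf.card, by omega, ?_⟩
  have hBcond : ∀ Bf : Finset ℕ, Bf ∈ Jf.powerset →
      ∀ a ∈ (Bf : Set ℕ), g < 2 * a ∧ a < g ∧ a ≠ m := by
    intro Bf hBf a ha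
    rw [Finset.mem_powerset] at hBf
    exact hJmem a (hBf (by exact_mod_cast ha))
  calc (2 : ℕ) ^ Jf.card = (↑Jf.powerset : Set (Finset ℕ)).ncard := by
        rw [Set.ncard_coe_finset, Finset.card_powerset]
    _ ≤ MED f := by
        rw [MED]
        refine Set.ncard_le_ncard_of_injOn (fun Bf => Sset m g (↑Bf : Set ℕ)) ?_ ?_
          (med_finite f)
        · intro Bf hBf
          have hB := hBcond Bf (by exact_mod_cast hBf)
          have hfrob := S_frob h1 h2 h3 hB
          refine ⟨S_isNS h1 h2 h3 hB, ?_, ?_⟩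
          · rw [hfrob]; omega
          · rw [S_embDim h1 h2 h3 hB (Bf.finite_toSet), S_mult h1 h2 h3 hB]
        · intro B1 hB1 B2 hB2 heq
          have heq' : Sset m g (↑B1 : Set ℕ) = Sset m g (↑B2 : Set ℕ) := heq
          have hb1 := hBcond B1 (by exact_mod_cast hB1)
          have hb2 := hBcond B2 (by exact_mod_cast hB2)
          ext a
          constructor
          · intro ha
            have hc := hb1 a (by exact_mod_cast ha)
            have : m + a ∈ Sset m g (↑B1 : Set ℕ) :=
              (S_recover h1 h2 h3 hb1 a hc.1 hc.2.1 hc.2.2).2 (by exact_mod_cast ha)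
            rw [heq'] at this
            exact_mod_cast (S_recover h1 h2 h3 hb2 a hc.1 hc.2.1 hc.2.2).1 this
          · intro ha
            have hc := hb2 a (by exact_mod_cast ha)
            have : m + a ∈ Sset m g (↑B2 : Set ℕ) :=
              (S_recover h1 h2 h3 hb2 a hc.1 hc.2.1 hc.2.2).2 (by exact_mod_cast ha)
            rw [← heq'] at this
            exact_mod_cast (S_recover h1 h2 h3 hb1 a hc.1 hc.2.1 hc.2.2).1 this

end MEDaux

theorem stmt_14 :
    (∃ c : ℝ, 0 < c ∧ ∀ f : ℕ, 1 ≤ f → c * 2 ^ ((f : ℝ) / 3) ≤ (MED f : ℝ)) ∧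
    (∀ f : ℕ, 1 ≤ f → (2 : ℝ) ^ (-(8 : ℝ) / 3) * 2 ^ ((f : ℝ) / 3) ≤ (MED f : ℝ)) := by
  have main : ∀ f : ℕ, 1 ≤ f → (2 : ℝ) ^ (-(8 : ℝ) / 3) * 2 ^ ((f : ℝ) / 3) ≤ (MED f : ℝ) := by
    intro f hf
    have hprod : (2 : ℝ) ^ (-(8 : ℝ) / 3) * 2 ^ ((f : ℝ) / 3)
        = (2 : ℝ) ^ (((f : ℝ) - 8) / 3) := by
      rw [← Real.rpow_add (by norm_num : (0:ℝ) < 2)]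
      congr 1
      ring
    rw [hprod]
    rcases le_or_gt f 8 with h8 | h8
    · have hle1 : (2 : ℝ) ^ (((f : ℝ) - 8) / 3) ≤ 1 := by
        apply Real.rpow_le_one_of_one_le_of_nonpos (by norm_num)
        have : (f : ℝ) ≤ 8 := by exact_mod_cast h8
        linarith
      have : (1 : ℝ) ≤ (MED f : ℝ) := by
        exact_mod_cast MEDaux.one_le_MED f hf
      linarith
    · obtain ⟨k, hk1, hk2⟩ := MEDaux.med_lower f (by omega)
      have hstep : (2 : ℝ) ^ (((f : ℝ) - 8) / 3) ≤ (2 : ℝ) ^ (k : ℝ) := by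
        rw [Real.rpow_le_rpow_left_iff (by norm_num : (1:ℝ) < 2)]
        have : (f : ℝ) ≤ 3 * (k : ℝ) + 8 := by exact_mod_cast hk1
        linarith
      have hcast : (2 : ℝ) ^ (k : ℝ) = ((2 ^ k : ℕ) : ℝ) := by
        rw [Real.rpow_natCast]
        push_cast
        ring
      have : ((2 ^ k : ℕ) : ℝ) ≤ (MED f : ℝ) := by exact_mod_cast hk2
      linarith [hstep, hcast ▸ hstep]
  exact ⟨⟨(2 : ℝ) ^ (-(8 : ℝ) / 3), Real.rpow_pos_of_pos (by norm_num) _, main⟩, main⟩
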